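/- Let d, g_a, g_b be natural numbers with g_b ≤ g_a ≤ d. Then ∑_{s=0}^{g_b} C(d, 2s + g_a - g_b) * C(2s + g_a - g_b, s + g_a - g_b) * C(d - 2s - g_a + g_b, g_b - s) = C(d, g_a) * C(d, g_b), where any binomial C(n,k) with k > n is zero. -/

import Mathlib

open Finset

lemma choose_swap (n a b : ℕ) :
    n.choose a * (n - a).choose b = n.choose b * (n - b).choose a := by
  rcases le_or_gt (a + b) n with h | h
  · have h1 := Nat.choose_mul (n := n) (k := a + b) (s := a) (by omega)
    have h2 := Nat.choose_mul (n := n) (k := a + b) (s := b) (by omega)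
    have h3 : (a + b).choose a = (a + b).choose b := Nat.choose_symm_add
    have e1 : a + b - a = b := by omega
    have e2 : a + b - b = a := by omega
    rw [e1] at h1; rw [e2] at h2
    rw [← h1, ← h2, h3]
  · rcases le_or_gt a n with ha | ha
    · rcases le_or_gt b n with hb | hb
      · rw [Nat.choose_eq_zero_of_lt (by omega : n - a < b),
          Nat.choose_eq_zero_of_lt (by omega : n - b < a)]
        ring
      · rw [Nat.choose_eq_zero_of_lt hb, Nat.choose_eq_zero_of_lt (by omega : n - a < b)]
        ring
    · rw [Nat.choose_eq_zero_of_lt ha, Nat.choose_eq_zero_of_lt (by omega : n - b < a)]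
      ring

lemma termwise (e f gb s : ℕ) (hs : s ≤ gb) :
    (gb + e + f).choose (2 * s + e) * (2 * s + e).choose (s + e) *
      (gb + e + f - (2 * s + e)).choose (gb - s)
    = (gb + e + f).choose (gb + e) * ((gb + e).choose (gb - s) * f.choose s) := by
  rcases le_or_gt s f with hf | hf
  · -- LHS transformation
    have h1 := Nat.choose_mul (n := gb + e + f) (k := 2 * s + e) (s := s + e)
      (by omega)
    have e1 : 2 * s + e - (s + e) = s := by omega
    have e2 : gb + e + f - (s + e) = gb + f - s := by omega
    rw [e1, e2] at h1
    have h2 := choose_swap (gb + f - s) s (gb - s)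
    have e3 : gb + f - s - s = gb + e + f - (2 * s + e) := by omega
    have e4 : gb + f - s - (gb - s) = f := by omega
    rw [e3, e4] at h2
    have h3 := choose_swap (gb + e + f) (s + e) (gb - s)
    have e5 : gb + e + f - (s + e) = gb + f - s := by omega
    have e6 : gb + e + f - (gb - s) = e + f + s := by omega
    rw [e5, e6] at h3
    -- RHS transformation
    have h4 := Nat.choose_mul (n := gb + e + f) (k := gb + e) (s := gb - s)
      (by omega)
    have e7 : gb + e + f - (gb - s) = e + f + s := by omega
    have e8 : gb + e - (gb - s) = s + e := by omega
    rw [e7, e8] at h4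
    calc (gb + e + f).choose (2 * s + e) * (2 * s + e).choose (s + e) *
          (gb + e + f - (2 * s + e)).choose (gb - s)
        = (gb + e + f).choose (s + e) * ((gb + f - s).choose s *
          (gb + e + f - (2 * s + e)).choose (gb - s)) := by rw [h1]; ring
      _ = (gb + e + f).choose (s + e) * ((gb + f - s).choose (gb - s) * f.choose s) := by
          rw [h2]
      _ = (gb + e + f).choose (gb - s) * (e + f + s).choose (s + e) * f.choose s := by
          rw [← mul_assoc, h3]
      _ = _ := by rw [← h4]; ring
  · -- both sides zero
    rw [Nat.choose_eq_zero_of_lt (by omega : f < s)]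
    rcases le_or_gt (2 * s + e) (gb + e + f) with hle | hlt
    · rw [Nat.choose_eq_zero_of_lt (by omega : gb + e + f - (2 * s + e) < gb - s)]
      ring
    · rw [Nat.choose_eq_zero_of_lt hlt]; ring

theorem stmt7 (d ga gb : ℕ) (h1 : gb ≤ ga) (h2 : ga ≤ d) :
    (∑ s ∈ Finset.range (gb + 1),
        d.choose (2 * s + ga - gb) * (2 * s + ga - gb).choose (s + ga - gb) *
          (d - (2 * s + ga - gb)).choose (gb - s))
      = d.choose ga * d.choose gb := by
  obtain ⟨e, rfl⟩ := Nat.exists_eq_add_of_le h1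
  obtain ⟨f, rfl⟩ := Nat.exists_eq_add_of_le h2
  have step1 : ∀ s ∈ Finset.range (gb + 1),
      (gb + e + f).choose (2 * s + (gb + e) - gb) *
        (2 * s + (gb + e) - gb).choose (s + (gb + e) - gb) *
        (gb + e + f - (2 * s + (gb + e) - gb)).choose (gb - s)
      = (gb + e + f).choose (gb + e) * ((gb + e).choose (gb - s) * f.choose s) := by
    intro s hs
    have hsgb : s ≤ gb := by simpa using Nat.lt_succ_iff.mp (Finset.mem_range.mp hs)
    have e1 : 2 * s + (gb + e) - gb = 2 * s + e := by omega
    have e2 : s + (gb + e) - gb = s + e := by omega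
    rw [e1, e2]
    exact termwise e f gb s hsgb
  rw [Finset.sum_congr rfl step1, ← Finset.mul_sum]
  congr 1
  have hv := Nat.add_choose_eq (gb + e) f gb
  rw [Finset.Nat.sum_antidiagonal_eq_sum_range_succ (fun i j => (gb + e).choose i * f.choose j)] at hv
  rw [hv, ← Finset.sum_range_reflect]
  apply Finset.sum_congr rfl
  intro s hs
  have hsgb : s ≤ gb := Nat.lt_succ_iff.mp (Finset.mem_range.mp hs)
  have e1 : gb + 1 - 1 - s = gb - s := by omega
  have e2 : gb - (gb - s) = s := by omega
  rw [e1, e2]
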